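/- (Lemma B.1: exponential regret decomposition.) For any policy π and any initial state s₁ ∈ S, (1/β)·( exp(β·V*_1(s₁)) − exp(β·V^π_1(s₁)) ) = E_{(s_1,…,s_H) ∼ μ^π_1(s₁)} [ Σ_{h=1}^{H} Δ̄_h( s_h, π_h(s_h); τ^π_{h−1} ) ], where for the sampled state sequence the π-controlled partial trajectory is τ^π_{h−1} := ((s_1, π_1(s_1)),…,(s_{h−1}, π_{h−1}(s_{h−1}))) and the semi-normalized gap is Δ̄_h(s,a; τ) := (1/β)·exp(β·R(τ))·( exp(β·V*_h(s)) − exp(β·Q*_h(s,a)) ) with R(τ) := Σ_{j=1}^{h−1} r_j(s_j,a_j). -/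

import Mathlib

open Real Filter Finset

namespace RiskMDP

variable {S A : Type*} [Fintype S] [Fintype A]

/-- Entropic value function of policy `pol`, by remaining-steps fuel:
`entV β r P pol H n s = V^pol_h(s)` with `h = H + 1 - n`. -/
noncomputable def entV (β : ℝ) (r : ℕ → S → A → ℝ) (P : ℕ → S → A → PMF S)
    (pol : ℕ → S → A) (H : ℕ) : ℕ → S → ℝ
  | 0, _ => 0
  | n + 1, s =>
      r (H - n) s (pol (H - n) s) +
        (1 / β) * Real.log (∑ s' : S, (P (H - n) s (pol (H - n) s) s').toReal *
          Real.exp (β * entV β r P pol H n s'))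

/-- Optimal entropic value function, by remaining-steps fuel. -/
noncomputable def entVstar (β : ℝ) (r : ℕ → S → A → ℝ) (P : ℕ → S → A → PMF S)
    (H : ℕ) : ℕ → S → ℝ
  | 0, _ => 0
  | n + 1, s =>
      ⨆ a : A, (r (H - n) s a +
        (1 / β) * Real.log (∑ s' : S, (P (H - n) s a s').toReal *
          Real.exp (β * entVstar β r P H n s')))

/-- Entropic action-value function of policy `pol` at step `h`. -/
noncomputable def entQ (β : ℝ) (r : ℕ → S → A → ℝ) (P : ℕ → S → A → PMF S)
    (pol : ℕ → S → A) (H : ℕ) (h : ℕ) (s : S) (a : A) : ℝ :=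
  r h s a + (1 / β) * Real.log (∑ s' : S, (P h s a s').toReal *
    Real.exp (β * entV β r P pol H (H - h) s'))

/-- Optimal entropic action-value function at step `h`. -/
noncomputable def entQstar (β : ℝ) (r : ℕ → S → A → ℝ) (P : ℕ → S → A → PMF S)
    (H : ℕ) (h : ℕ) (s : S) (a : A) : ℝ :=
  r h s a + (1 / β) * Real.log (∑ s' : S, (P h s a s').toReal *
    Real.exp (β * entVstar β r P H (H - h) s'))

/-- Risk-neutral value function of policy `pol`, by remaining-steps fuel. -/
noncomputable def rnV (r : ℕ → S → A → ℝ) (P : ℕ → S → A → PMF S)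
    (pol : ℕ → S → A) (H : ℕ) : ℕ → S → ℝ
  | 0, _ => 0
  | n + 1, s =>
      r (H - n) s (pol (H - n) s) +
        ∑ s' : S, (P (H - n) s (pol (H - n) s) s').toReal * rnV r P pol H n s'

/-- Risk-neutral optimal value function, by remaining-steps fuel. -/
noncomputable def rnVstar (r : ℕ → S → A → ℝ) (P : ℕ → S → A → PMF S)
    (H : ℕ) : ℕ → S → ℝ
  | 0, _ => 0
  | n + 1, s =>
      ⨆ a : A, (r (H - n) s a +
        ∑ s' : S, (P (H - n) s a s').toReal * rnVstar r P H n s')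

/-- Risk-neutral optimal action-value function at step `h`. -/
noncomputable def rnQstar (r : ℕ → S → A → ℝ) (P : ℕ → S → A → PMF S)
    (H : ℕ) (h : ℕ) (s : S) (a : A) : ℝ :=
  r h s a + ∑ s' : S, (P h s a s').toReal * rnVstar r P H (H - h) s'

/-- PMF on the list of states `(s_h, …, s_{h+n-1})` (so `n` states in total), starting from
state `s` at step `h` and following policy `pol`; built by iterated `PMF.bind`. -/
noncomputable def traj (P : ℕ → S → A → PMF S) (pol : ℕ → S → A) :
    ℕ → ℕ → S → PMF (List S)
  | 0, _, _ => PMF.pure []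
  | n + 1, h, s =>
      ((P h s (pol h s)).bind fun s' => traj P pol n (h + 1) s').map (fun l => s :: l)

/-- Cumulative reward `Σ_i r_{h+i}(s_{h+i}, pol_{h+i}(s_{h+i}))` along a list of states
starting at step `h`. -/
def listReward (r : ℕ → S → A → ℝ) (pol : ℕ → S → A) : ℕ → List S → ℝ
  | _, [] => 0
  | h, s :: l => r h s (pol h s) + listReward r pol (h + 1) l

/-- Cumulative reward `R(τ) = Σ_j r_j(s_j, a_j)` of a partial state–action trajectory
whose first pair is at step `j`. -/
def pairReward (r : ℕ → S → A → ℝ) : ℕ → List (S × A) → ℝ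
  | _, [] => 0
  | j, p :: l => r j p.1 p.2 + pairReward r (j + 1) l

/-- The normalizer `ψ_β`. -/
noncomputable def psi (β : ℝ) (H : ℕ) : ℝ :=
  if 0 < β then 1 / β else Real.exp (-β * H) / β

/-- The cascaded gap `Δ_{h,β}(s, a; τ)`. -/
noncomputable def cgap (β : ℝ) (r : ℕ → S → A → ℝ) (P : ℕ → S → A → PMF S)
    (H : ℕ) (h : ℕ) (s : S) (a : A) (τ : List (S × A)) : ℝ :=
  psi β H * Real.exp (β * pairReward r 1 τ) *
    (Real.exp (β * entVstar β r P H (H + 1 - h) s) -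
      Real.exp (β * entQstar β r P H h s a))

variable {S A : Type*}

/-- The sum `Σ_h Δ̄_h(s_h, π_h(s_h); τ^π_{h-1})` of semi-normalized cascaded gaps along a
realized list of states starting at step `h` with accumulated partial trajectory `τ`,
where `Δ̄_h(s,a;τ) = (1/β) e^{β R(τ)} (e^{β V*_h(s)} - e^{β Q*_h(s,a)})`. -/
noncomputable def gapSum [Fintype S] [Fintype A] (β : ℝ) (r : ℕ → S → A → ℝ)
    (P : ℕ → S → A → PMF S) (pol : ℕ → S → A) (H : ℕ) :
    ℕ → List (S × A) → List S → ℝ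
  | _, _, [] => 0
  | h, τ, s :: l =>
      (1 / β) * Real.exp (β * pairReward r 1 τ) *
          (Real.exp (β * entVstar β r P H (H + 1 - h) s) -
            Real.exp (β * entQstar β r P H h s (pol h s))) +
        gapSum β r P pol H (h + 1) (τ ++ [(s, pol h s)]) l

/-! ### Auxiliary lemmas for the regret decomposition -/

section Aux

lemma pairReward_append (r : ℕ → S → A → ℝ) :
    ∀ (τ : List (S × A)) (j : ℕ) (s : S) (a : A),
      pairReward r j (τ ++ [(s, a)]) = pairReward r j τ + r (j + τ.length) s a := by
  intro τ
  induction τ with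
  | nil => intro j s a; simp [pairReward]
  | cons p l ih =>
      intro j s a
      show r j p.1 p.2 + pairReward r (j + 1) (l ++ [(s, a)])
        = r j p.1 p.2 + pairReward r (j + 1) l + r (j + (l.length + 1)) s a
      rw [ih, show j + (l.length + 1) = j + 1 + l.length from by omega]
      ring

lemma pmf_sum_toReal [Fintype S] (p : PMF S) : ∑ s : S, (p s).toReal = 1 := by
  rw [← ENNReal.toReal_sum (fun a _ => p.apply_ne_top a)]
  rw [← tsum_fintype (L := SummationFilter.unconditional S), p.tsum_coe, ENNReal.toReal_one]

lemma pmf_sum_exp_pos [Fintype S] (p : PMF S) (f : S → ℝ) :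
    0 < ∑ s' : S, (p s').toReal * Real.exp (f s') := by
  have h1 : ∑ s : S, (p s).toReal = 1 := pmf_sum_toReal p
  obtain ⟨s₀, -, hs₀⟩ := Finset.exists_ne_zero_of_sum_ne_zero (by rw [h1]; norm_num :
    ∑ s : S, (p s).toReal ≠ 0)
  refine Finset.sum_pos' (fun s _ => mul_nonneg ENNReal.toReal_nonneg (Real.exp_pos _).le)
    ⟨s₀, Finset.mem_univ _, mul_pos ?_ (Real.exp_pos _)⟩
  exact lt_of_le_of_ne ENNReal.toReal_nonneg (Ne.symm hs₀)

lemma exp_beta_add_log {β : ℝ} (hβ : β ≠ 0) (c X : ℝ) (hX : 0 < X) :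
    Real.exp (β * (c + 1 / β * Real.log X)) = Real.exp (β * c) * X := by
  have h : β * (c + 1 / β * Real.log X) = β * c + Real.log X := by field_simp
  rw [h, Real.exp_add, Real.exp_log hX]

lemma pmf_hasSum_toReal {α : Type*} (p : PMF α) : HasSum (fun a => (p a).toReal) 1 := by
  have h := ENNReal.hasSum_toReal (f := fun a => p a) (by rw [p.tsum_coe]; exact ENNReal.one_ne_top)
  have h2 : (∑' a, ((p a).toReal)) = 1 := by
    rw [← ENNReal.tsum_toReal_eq (fun a => p.apply_ne_top a), p.tsum_coe, ENNReal.toReal_one]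
  rwa [h2] at h

lemma bind_apply_toReal [Fintype S] {α : Type*} (p : PMF S) (u : S → PMF α) (l : α) :
    ((p.bind u) l).toReal = ∑ s' : S, (p s').toReal * (u s' l).toReal := by
  rw [PMF.bind_apply, tsum_fintype, ENNReal.toReal_sum]
  · exact Finset.sum_congr rfl fun s' _ => ENNReal.toReal_mul
  · intro s' _
    exact ENNReal.mul_ne_top (p.apply_ne_top s') ((u s').apply_ne_top l)

lemma map_cons_apply {α : Type*} (q : PMF (List α)) (s : α) (l : List α) :
    (q.map (s :: ·)) (s :: l) = q l := by
  rw [PMF.map_apply]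
  rw [tsum_eq_single l]
  · simp
  · intro b hb
    rw [if_neg]
    intro hcon
    exact hb (List.cons_injective hcon).symm

lemma map_cons_apply_ne {α : Type*} (q : PMF (List α)) (s : α) (l : List α)
    (hl : l ∉ Set.range (List.cons s)) : (q.map (s :: ·)) l = 0 := by
  rw [PMF.map_apply]
  apply ENNReal.tsum_eq_zero.2
  intro b
  rw [if_neg]
  intro h
  exact hl ⟨b, h.symm⟩

lemma gap_hasSum [Fintype S] [Nonempty S] [Fintype A] [Nonempty A]
    (H : ℕ) (β : ℝ) (hβ : β ≠ 0)
    (r : ℕ → S → A → ℝ) (P : ℕ → S → A → PMF S) (pol : ℕ → S → A) :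
    ∀ (n h : ℕ) (τ : List (S × A)) (s : S), h + n = H + 1 → τ.length + 1 = h →
      HasSum (fun l => (traj P pol n h s l).toReal * gapSum β r P pol H h τ l)
        (1 / β * Real.exp (β * pairReward r 1 τ) *
          (Real.exp (β * entVstar β r P H n s) - Real.exp (β * entV β r P pol H n s))) := by
  intro n
  induction n with
  | zero =>
      intro h τ s hhn hτ
      have hfun : (fun l => (traj P pol 0 h s l).toReal * gapSum β r P pol H h τ l)
          = fun _ => (0 : ℝ) := by
        funext l
        cases l with
        | nil => simp [gapSum]
        | cons a l => simp [traj, PMF.pure_apply, gapSum]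
      rw [hfun]
      have hval : 1 / β * Real.exp (β * pairReward r 1 τ) *
          (Real.exp (β * entVstar β r P H 0 s) - Real.exp (β * entV β r P pol H 0 s)) = 0 := by
        rw [show entVstar β r P H 0 s = 0 from rfl, show entV β r P pol H 0 s = 0 from rfl]
        simp
      rw [hval]
      exact hasSum_zero
  | succ n ih =>
      intro h τ s hhn hτ
      have hhH : h = H - n := by omega
      have hHn : H - n = h := by omega
      have hHh : H - h = n := by omega
      have hH1h : H + 1 - h = n + 1 := by omega
      set a := pol h s with ha
      set p : PMF S := P h s a with hp
      set q : PMF (List S) := p.bind (fun s' => traj P pol n (h + 1) s') with hq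
      have htraj : traj P pol (n + 1) h s = q.map (s :: ·) := by
        rw [hq, hp, ha]; rfl
      rw [htraj]
      -- restrict to the range of `cons s`
      rw [← (List.cons_injective (a := s)).hasSum_iff (fun l hl => by
        rw [map_cons_apply_ne q s l hl, ENNReal.toReal_zero, zero_mul])]
      have hcomp : ((fun l => ((q.map (s :: ·)) l).toReal * gapSum β r P pol H h τ l)
            ∘ (s :: ·))
          = fun l => (q l).toReal *
              (1 / β * Real.exp (β * pairReward r 1 τ) *
                (Real.exp (β * entVstar β r P H (n + 1) s) -
                  Real.exp (β * entQstar β r P H h s a)) +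
              gapSum β r P pol H (h + 1) (τ ++ [(s, a)]) l) := by
        funext l
        simp only [Function.comp_apply, map_cons_apply, gapSum, hH1h, ha]
      rw [hcomp]
      set Δ : ℝ := 1 / β * Real.exp (β * pairReward r 1 τ) *
          (Real.exp (β * entVstar β r P H (n + 1) s) -
            Real.exp (β * entQstar β r P H h s a)) with hΔ
      set τ' : List (S × A) := τ ++ [(s, a)] with hτ'
      -- the two HasSum pieces
      have h1 : HasSum (fun l => (q l).toReal * Δ) Δ := by
        simpa using (pmf_hasSum_toReal q).mul_right Δ
      have h2 : HasSum (fun l => (q l).toReal * gapSum β r P pol H (h + 1) τ' l)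
          (∑ s' : S, (p s').toReal *
            (1 / β * Real.exp (β * pairReward r 1 τ') *
              (Real.exp (β * entVstar β r P H n s') -
                Real.exp (β * entV β r P pol H n s')))) := by
        have hfun : (fun l => (q l).toReal * gapSum β r P pol H (h + 1) τ' l)
            = fun l => ∑ s' : S, (p s').toReal *
                ((traj P pol n (h + 1) s' l).toReal * gapSum β r P pol H (h + 1) τ' l) := by
          funext l
          rw [hq, bind_apply_toReal, Finset.sum_mul]
          exact Finset.sum_congr rfl fun s' _ => by ring
        rw [hfun]
        exact hasSum_sum fun s' _ =>
          ((ih (h + 1) τ' s' (by omega) (by simp [hτ']; omega)).mul_left _)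
      -- combine and identify the value
      have h3 := h1.add h2
      convert h3 using 1
      · funext l; ring
      -- value identity
      have hRτ' : pairReward r 1 τ' = pairReward r 1 τ + r h s a := by
        rw [hτ', pairReward_append]
        congr 2
        omega
      have hXstar := pmf_sum_exp_pos p (fun s' => β * entVstar β r P H n s')
      have hXpi := pmf_sum_exp_pos p (fun s' => β * entV β r P pol H n s')
      have hEQ : Real.exp (β * entQstar β r P H h s a)
          = Real.exp (β * r h s a) *
            ∑ s' : S, (p s').toReal * Real.exp (β * entVstar β r P H n s') := by
        rw [entQstar, hHh, ← hp]
        exact exp_beta_add_log hβ _ _ hXstar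
      have hEpi : Real.exp (β * entV β r P pol H (n + 1) s)
          = Real.exp (β * r h s a) *
            ∑ s' : S, (p s').toReal * Real.exp (β * entV β r P pol H n s') := by
        rw [show entV β r P pol H (n + 1) s
            = r (H - n) s (pol (H - n) s) +
              1 / β * Real.log (∑ s' : S, (P (H - n) s (pol (H - n) s) s').toReal *
                Real.exp (β * entV β r P pol H n s')) from rfl, hHn, ← ha, ← hp]
        exact exp_beta_add_log hβ _ _ hXpi
      have hsum2 : (∑ s' : S, (p s').toReal *
            (1 / β * Real.exp (β * pairReward r 1 τ') *
              (Real.exp (β * entVstar β r P H n s') -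
                Real.exp (β * entV β r P pol H n s'))))
          = 1 / β * Real.exp (β * pairReward r 1 τ) *
            (Real.exp (β * entQstar β r P H h s a) -
              Real.exp (β * entV β r P pol H (n + 1) s)) := by
        rw [hEQ, hEpi, hRτ', mul_add, Real.exp_add]
        rw [Finset.sum_congr rfl (fun s' _ => by ring :
          ∀ s' ∈ Finset.univ, (p s').toReal *
            (1 / β * (Real.exp (β * pairReward r 1 τ) * Real.exp (β * r h s a)) *
              (Real.exp (β * entVstar β r P H n s') -
                Real.exp (β * entV β r P pol H n s')))
          = 1 / β * (Real.exp (β * pairReward r 1 τ) * Real.exp (β * r h s a)) *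
              ((p s').toReal * Real.exp (β * entVstar β r P H n s')
                - (p s').toReal * Real.exp (β * entV β r P pol H n s')))]
        rw [← Finset.mul_sum, Finset.sum_sub_distrib]
        ring
      rw [hsum2, hΔ]
      ring

end Aux

/-- **Lemma B.1: exponential regret decomposition.** For any policy `π`
and initial state `s₁`,
`(1/β)(e^{β V*_1(s₁)} - e^{β V^π_1(s₁)}) = E_{μ^π_1(s₁)}[Σ_{h=1}^H Δ̄_h(s_h, π_h(s_h); τ^π_{h-1})]`. -/
theorem exponential_regret_decomposition
    [Fintype S] [Nonempty S] [Fintype A] [Nonempty A]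
    (H : ℕ) (hH : 1 ≤ H) (β : ℝ) (hβ : β ≠ 0)
    (r : ℕ → S → A → ℝ) (hr : ∀ h ∈ Finset.Icc 1 H, ∀ s a, 0 ≤ r h s a ∧ r h s a ≤ 1)
    (P : ℕ → S → A → PMF S) (pol : ℕ → S → A) (s₁ : S) :
    (1 / β) * (Real.exp (β * entVstar β r P H H s₁) -
        Real.exp (β * entV β r P pol H H s₁))
      = ∑' l : List S, (traj P pol H 1 s₁ l).toReal * gapSum β r P pol H 1 [] l := by
  have h := gap_hasSum H β hβ r P pol H 1 [] s₁ (by omega) (by simp)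
  rw [h.tsum_eq]
  simp [pairReward]

end RiskMDP
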